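/- Let P be stochastic, and suppose ΠA = AP (dynamic-exactness). Then for any π₀ and p₀, ‖π₀ᵀΠ^k A − p₀ᵀP^k‖₁ ≤ ‖π₀ᵀA − p₀ᵀ‖₁ for all k ≥ 0. -/
import Mathlib


open Matrix BigOperators

noncomputable def l1 {n : ℕ} (v : Fin n → ℝ) : ℝ := ∑ i, |v i|

noncomputable def ninf {m n : ℕ} (A : Matrix (Fin m) (Fin n) ℝ) : ℝ :=
  ⨆ i, ∑ j, |A i j|

def IsStochastic {m n : ℕ} (A : Matrix (Fin m) (Fin n) ℝ) : Prop :=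
  (∀ i j, 0 ≤ A i j) ∧ ∀ i, ∑ j, A i j = 1

def IsGenerator {n : ℕ} (Q : Matrix (Fin n) (Fin n) ℝ) : Prop :=
  (∀ i j, i ≠ j → 0 ≤ Q i j) ∧ ∀ i, ∑ j, Q i j = 0

lemma l1_vecMul_le {n : ℕ} (P : Matrix (Fin n) (Fin n) ℝ) (hP : IsStochastic P)
    (v : Fin n → ℝ) : l1 (Matrix.vecMul v P) ≤ l1 v := by
  unfold l1
  calc ∑ j, |Matrix.vecMul v P j| ≤ ∑ j, ∑ i, |v i| * P i j := by
        refine Finset.sum_le_sum fun j _ => ?_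
        rw [Matrix.vecMul, dotProduct]
        refine (Finset.abs_sum_le_sum_abs _ _).trans ?_
        refine Finset.sum_le_sum fun i _ => ?_
        rw [abs_mul, abs_of_nonneg (hP.1 i j)]
    _ = ∑ i, ∑ j, |v i| * P i j := Finset.sum_comm
    _ = ∑ i, |v i| := by
        refine Finset.sum_congr rfl fun i _ => ?_
        rw [← Finset.mul_sum, hP.2 i, mul_one]

lemma pow_stochastic {n : ℕ} (P : Matrix (Fin n) (Fin n) ℝ) (hP : IsStochastic P)
    (k : ℕ) : IsStochastic (P ^ k) := by
  induction k with
  | zero =>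
    constructor
    · intro i j
      simp [pow_zero, Matrix.one_apply]
      split <;> norm_num
    · intro i
      simp [pow_zero, Matrix.one_apply]
  | succ k ih =>
    rw [pow_succ]
    constructor
    · intro i j
      rw [Matrix.mul_apply]
      exact Finset.sum_nonneg fun l _ => mul_nonneg (ih.1 i l) (hP.1 l j)
    · intro i
      rw [show ∑ j, (P ^ k * P) i j = ∑ j, ∑ l, (P ^ k) i l * P l j from rfl,
        Finset.sum_comm]
      calc ∑ l, ∑ j, (P ^ k) i l * P l j = ∑ l, (P ^ k) i l := by
            refine Finset.sum_congr rfl fun l _ => ?_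
            rw [← Finset.mul_sum, hP.2 l, mul_one]
        _ = 1 := ih.2 i

theorem stmt_7 {m n : ℕ} (P : Matrix (Fin n) (Fin n) ℝ) (hP : IsStochastic P)
    (Pm : Matrix (Fin m) (Fin m) ℝ) (A : Matrix (Fin m) (Fin n) ℝ)
    (hdyn : Pm * A = A * P) (π₀ : Fin m → ℝ) (p₀ : Fin n → ℝ) (k : ℕ) :
    l1 (Matrix.vecMul π₀ (Pm ^ k * A) - Matrix.vecMul p₀ (P ^ k)) ≤
      l1 (Matrix.vecMul π₀ A - p₀) := by
  have hcomm : Pm ^ k * A = A * P ^ k := by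
    induction k with
    | zero => simp
    | succ k ih =>
      rw [pow_succ, pow_succ, Matrix.mul_assoc, hdyn, ← Matrix.mul_assoc, ih,
        Matrix.mul_assoc]
  have key : Matrix.vecMul π₀ (Pm ^ k * A) - Matrix.vecMul p₀ (P ^ k)
      = Matrix.vecMul (Matrix.vecMul π₀ A - p₀) (P ^ k) := by
    rw [hcomm, Matrix.sub_vecMul, ← Matrix.vecMul_vecMul]
  rw [key]
  exact l1_vecMul_le _ (pow_stochastic P hP k) _
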